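/- arXiv:1801.04947 — 6 statements merged into one kernel-verified Lean document; each statement's English description precedes it below -/
import Mathlib

section
/- For the 2×2 matrix polynomials G(x,y) = [[1 - y - x_1², x_1 x_2],[x_1 x_2, y - x_2²]] and Q(x,z) = [[1 + z x_2, z - 2 x_1],[z - 2 x_1, 1 - z x_2]], one has the projection identity P_G = {(x_1,x_2) ∈ R² : |x_1 + x_2| ≤ 1 and |x_1 − x_2| ≤ 1}. -/
lemma psd2 (a b c : ℝ) :
    (!![a, b; b, c] : Matrix (Fin 2) (Fin 2) ℝ).PosSemidef ↔
      0 ≤ a ∧ 0 ≤ c ∧ b ^ 2 ≤ a * c := by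
  rw [Matrix.posSemidef_iff_dotProduct_mulVec]
  constructor
  · rintro ⟨-, h⟩
    have key : ∀ u v : ℝ, 0 ≤ a * u ^ 2 + 2 * b * u * v + c * v ^ 2 := by
      intro u v
      have := h ![u, v]
      simp [Matrix.mulVec, dotProduct, Fin.sum_univ_two] at this
      nlinarith [this]
    have ha : 0 ≤ a := by have := key 1 0; linarith
    have hc : 0 ≤ c := by have := key 0 1; linarith
    refine ⟨ha, hc, ?_⟩
    rcases eq_or_lt_of_le (add_nonneg ha hc) with h0 | h0
    · have ha0 : a = 0 := by linarith
      have hc0 : c = 0 := by linarith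
      have h1 := key 1 1
      have h2 := key 1 (-1)
      nlinarith
    · have h1 := key (-b) a
      have h2 := key c (-b)
      nlinarith
  · rintro ⟨ha, hc, hb⟩
    have herm : (!![a, b; b, c] : Matrix (Fin 2) (Fin 2) ℝ).IsHermitian := by
      ext i j
      fin_cases i <;> fin_cases j <;> simp [Matrix.conjTranspose_apply]
    refine ⟨herm, fun x => ?_⟩
    have h : dotProduct (star x) ((!![a, b; b, c] : Matrix (Fin 2) (Fin 2) ℝ).mulVec x)
        = a * (x 0) ^ 2 + 2 * b * (x 0) * (x 1) + c * (x 1) ^ 2 := by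
      simp [Matrix.mulVec, dotProduct, Fin.sum_univ_two]
      ring
    rw [h]
    rcases eq_or_lt_of_le ha with ha0 | ha0
    · have hb0 : b = 0 := by nlinarith
      rw [← ha0, hb0]
      nlinarith [mul_nonneg hc (sq_nonneg (x 1))]
    · have key : 0 ≤ a * (a * x 0 ^ 2 + 2 * b * x 0 * x 1 + c * x 1 ^ 2) := by
        nlinarith [sq_nonneg (a * x 0 + b * x 1), sq_nonneg (x 1)]
      nlinarith [key]

theorem stmt_6 :
    {p : ℝ × ℝ | ∃ y : ℝ,
      (!![1 - y - p.1 ^ 2, p.1 * p.2; p.1 * p.2, y - p.2 ^ 2] :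
        Matrix (Fin 2) (Fin 2) ℝ).PosSemidef} =
    {p : ℝ × ℝ | |p.1 + p.2| ≤ 1 ∧ |p.1 - p.2| ≤ 1} := by
  ext ⟨x1, x2⟩
  simp only [Set.mem_setOf_eq, psd2, abs_le]
  constructor
  · rintro ⟨y, ha, hc, hd⟩
    have hsum : (x1 + x2) ^ 2 + (x1 - x2) ^ 2 ≤ 2 := by nlinarith
    have hprod : 0 ≤ (1 - (x1 + x2) ^ 2) * (1 - (x1 - x2) ^ 2) := by
      nlinarith [sq_nonneg ((1 - y - x1 ^ 2) - (y - x2 ^ 2))]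
    have hs1 : (x1 + x2) ^ 2 ≤ 1 := by nlinarith [sq_nonneg (x1 - x2), sq_nonneg (x1 + x2)]
    have hs2 : (x1 - x2) ^ 2 ≤ 1 := by nlinarith [sq_nonneg (x1 - x2), sq_nonneg (x1 + x2)]
    constructor <;> constructor <;> nlinarith
  · rintro ⟨⟨h1, h2⟩, h3, h4⟩
    have a1 : 0 ≤ (1 - (x1 + x2)) * (1 + (x1 + x2)) :=
      mul_nonneg (by linarith) (by linarith)
    have a2 : 0 ≤ (1 - (x1 - x2)) * (1 + (x1 - x2)) :=
      mul_nonneg (by linarith) (by linarith)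
    refine ⟨x2 ^ 2 + (1 - x1 ^ 2 - x2 ^ 2) / 2, by nlinarith, by nlinarith, ?_⟩
    nlinarith [mul_nonneg a1 a2]
end

section
/- The identity Q(x, x_1) = (1/2) M(x)² + ((1 - x_1² - x_2²)/2) I holds, where Q(x,z) = [[1 + z x_2, z - 2 x_1],[z - 2 x_1, 1 - z x_2]] and M(x) = [[x_1 + x_2, -1],[-1, x_1 - x_2]]. Consequently, if x_1² + x_2² ≤ 1 then Q(x, x_1) ⪰ 0. -/
theorem stmt_8 (x₁ x₂ : ℝ) :
    (!![1 + x₁ * x₂, x₁ - 2 * x₁; x₁ - 2 * x₁, 1 - x₁ * x₂] : Matrix (Fin 2) (Fin 2) ℝ) =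
      (1 / 2 : ℝ) • (!![x₁ + x₂, -1; -1, x₁ - x₂] : Matrix (Fin 2) (Fin 2) ℝ) ^ 2 +
      ((1 - x₁ ^ 2 - x₂ ^ 2) / 2) • (1 : Matrix (Fin 2) (Fin 2) ℝ) ∧
    (x₁ ^ 2 + x₂ ^ 2 ≤ 1 →
      (!![1 + x₁ * x₂, x₁ - 2 * x₁; x₁ - 2 * x₁, 1 - x₁ * x₂] :
        Matrix (Fin 2) (Fin 2) ℝ).PosSemidef) := by
  constructor
  · rw [pow_two, Matrix.mul_fin_two]
    ext i j
    fin_cases i <;> fin_cases j <;> simp [Matrix.one_apply] <;> ring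
  · intro h
    rw [Matrix.posSemidef_iff_dotProduct_mulVec]
    constructor
    · ext i j
      fin_cases i <;> fin_cases j <;>
        simp [Matrix.conjTranspose_apply, Matrix.vecHead, Matrix.vecTail]
    · intro v
      have hv : ∀ i : Fin 2, (v i : ℝ) = v i := fun _ => rfl
      simp only [dotProduct, Matrix.mulVec, Fin.sum_univ_two, Pi.star_apply, star_trivial]
      norm_num [Matrix.cons_val_zero, Matrix.cons_val_one, Matrix.head_cons]
      nlinarith [sq_nonneg (v 0 + v 1), sq_nonneg (v 0 - v 1), sq_nonneg (v 0), sq_nonneg (v 1),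
        sq_nonneg ((x₁ + x₂) * v 0 - v 1), sq_nonneg ((x₁ - x₂) * v 1 - v 0),
        sq_nonneg (x₁ * v 0 + x₂ * v 0 - v 1), sq_nonneg (x₁ * v 1 - x₂ * v 1 - v 0)]
end

section
/- The set {(x_1,x_2) ∈ R² : |x_1 + x_2| ≤ 1 and |x_1 − x_2| ≤ 1} is contained in {(x_1,x_2) ∈ R² : 1 + x_2² − 4 x_1² x_2² ≥ 0}. -/
theorem stmt_9 :
    {p : ℝ × ℝ | |p.1 + p.2| ≤ 1 ∧ |p.1 - p.2| ≤ 1} ⊆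
    {p : ℝ × ℝ | 1 + p.2 ^ 2 - 4 * p.1 ^ 2 * p.2 ^ 2 ≥ 0} := by
  rintro ⟨x, y⟩ ⟨h1, h2⟩
  simp only [Set.mem_setOf_eq] at *
  have a1 : (x + y)^2 ≤ 1 := by rw [← sq_abs]; nlinarith [abs_nonneg (x+y)]
  have a2 : (x - y)^2 ≤ 1 := by rw [← sq_abs]; nlinarith [abs_nonneg (x-y)]
  nlinarith [sq_nonneg ((x+y)^2 - (x-y)^2), sq_nonneg ((x+y)^2 + (x-y)^2), mul_nonneg (sq_nonneg (x+y)) (sq_nonneg (x-y))]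
end

section
/- Define the set S_Q = {(x,z) ∈ R² : |x − z(z² − 1)| ≤ 1/4 and |z| ≤ 3/2}. Then the projection of S_Q onto the x-coordinate equals the interval [−17/8, 17/8], and for every x ∈ [−1,1] there exists z with (x,z) in the interior of S_Q, yet there is no continuous map φ : [−1,1] → R with (x, φ(x)) ∈ S_Q for all x ∈ [−1,1]. -/
lemma cubic_le {z : ℝ} (h1 : -(3/2) ≤ z) (h2 : z ≤ 3/2) : z*(z^2-1) ≤ 15/8 := by
  nlinarith [mul_nonneg (by linarith : (0:ℝ) ≤ 3/2 - z) (sq_nonneg (z+3/4))]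

lemma cubic_ge {z : ℝ} (h1 : -(3/2) ≤ z) (h2 : z ≤ 3/2) : -(15/8) ≤ z*(z^2-1) := by
  nlinarith [mul_nonneg (by linarith : (0:ℝ) ≤ z + 3/2) (sq_nonneg (z-3/4))]

lemma cubic_small {z : ℝ} (h1 : -(3/2) ≤ z) (h2 : z ≤ 1/2) : z*(z^2-1) < 3/4 := by
  nlinarith [mul_nonneg (by linarith : (0:ℝ) ≤ z + 3/2) (sq_nonneg (z+1/2)),
    mul_nonneg (by linarith : (0:ℝ) ≤ 1/2 - z) (sq_nonneg z), sq_nonneg (z+1/2)]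

lemma cubic_surj {y : ℝ} (h1 : -(15/8) ≤ y) (h2 : y ≤ 15/8) :
    ∃ z : ℝ, z ∈ Set.Icc (-(3/2) : ℝ) (3/2) ∧ z*(z^2-1) = y := by
  have hcont : ContinuousOn (fun z : ℝ => z*(z^2-1)) (Set.Icc (-(3/2)) (3/2)) :=
    (by continuity : Continuous fun z : ℝ => z*(z^2-1)).continuousOn
  have h := intermediate_value_Icc (by norm_num : (-(3/2):ℝ) ≤ 3/2) hcont
  have hy : y ∈ Set.Icc ((fun z : ℝ => z*(z^2-1)) (-(3/2))) ((fun z : ℝ => z*(z^2-1)) (3/2)) := by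
    constructor <;> norm_num <;> linarith
  obtain ⟨z, hz, hze⟩ := h hy
  exact ⟨z, hz, hze⟩

theorem stmt_10 :
    {x : ℝ | ∃ z : ℝ, (x, z) ∈
        {p : ℝ × ℝ | |p.1 - p.2 * (p.2 ^ 2 - 1)| ≤ 1 / 4 ∧ |p.2| ≤ 3 / 2}} =
      Set.Icc (-(17 / 8) : ℝ) (17 / 8) ∧
    (∀ x ∈ Set.Icc (-1 : ℝ) 1, ∃ z : ℝ, (x, z) ∈
      interior {p : ℝ × ℝ | |p.1 - p.2 * (p.2 ^ 2 - 1)| ≤ 1 / 4 ∧ |p.2| ≤ 3 / 2}) ∧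
    ¬ ∃ φ : ℝ → ℝ, ContinuousOn φ (Set.Icc (-1 : ℝ) 1) ∧
      ∀ x ∈ Set.Icc (-1 : ℝ) 1, (x, φ x) ∈
        {p : ℝ × ℝ | |p.1 - p.2 * (p.2 ^ 2 - 1)| ≤ 1 / 4 ∧ |p.2| ≤ 3 / 2} := by
  refine ⟨?_, ?_, ?_⟩
  · -- projection
    ext x
    simp only [Set.mem_setOf_eq, Set.mem_Icc]
    constructor
    · rintro ⟨z, hz1, hz2⟩
      rw [abs_le] at hz1 hz2
      have hle := cubic_le hz2.1 hz2.2
      have hge := cubic_ge hz2.1 hz2.2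
      constructor <;> linarith
    · rintro ⟨hx1, hx2⟩
      set y := max (-(15/8 : ℝ)) (min x (15/8)) with hy
      have hy1 : -(15/8 : ℝ) ≤ y := le_max_left _ _
      have hy2 : y ≤ 15/8 := max_le (by norm_num) (min_le_right _ _)
      obtain ⟨z, hzm, hze⟩ := cubic_surj hy1 hy2
      refine ⟨z, ?_, ?_⟩
      · rw [abs_le, hze]
        constructor
        · -- -(1/4) ≤ x - y
          rcases le_total (-(15/8 : ℝ)) x with h | h
          · have : y ≤ x := by
              apply max_le h (le_trans (min_le_left _ _) le_rfl)
            linarith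
          · have : min x (15/8 : ℝ) = x := min_eq_left (by linarith)
            have hyx : y = -(15/8) := by rw [hy, this]; exact max_eq_left h
            rw [hyx]; linarith
        · -- x - y ≤ 1/4
          rcases le_total x (15/8 : ℝ) with h | h
          · have : x ≤ y := le_trans (le_min le_rfl h) (le_max_right _ _)
            linarith
          · have : min x (15/8 : ℝ) = (15/8 : ℝ) := min_eq_right h
            have hyx : y = 15/8 := by rw [hy, this]; exact max_eq_right (by norm_num)
            rw [hyx]; linarith
      · rw [abs_le]; exact ⟨hzm.1, hzm.2⟩
  · -- interior
    intro x hx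
    obtain ⟨hx1, hx2⟩ := hx
    obtain ⟨z, hzm, hze⟩ := cubic_surj (y := x) (by linarith) (by linarith)
    have hz1 : -(3/2 : ℝ) < z := by
      rcases lt_or_eq_of_le hzm.1 with h | h
      · exact h
      · exfalso; rw [← h] at hze; norm_num at hze; linarith
    have hz2 : z < 3/2 := by
      rcases lt_or_eq_of_le hzm.2 with h | h
      · exact h
      · exfalso; rw [h] at hze; norm_num at hze; linarith
    refine ⟨z, ?_⟩
    have hopen : IsOpen {p : ℝ × ℝ | |p.1 - p.2 * (p.2 ^ 2 - 1)| < 1 / 4 ∧ |p.2| < 3 / 2} := by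
      apply IsOpen.and
      · exact isOpen_lt (by fun_prop) continuous_const
      · exact isOpen_lt (by fun_prop) continuous_const
    have hsub : {p : ℝ × ℝ | |p.1 - p.2 * (p.2 ^ 2 - 1)| < 1 / 4 ∧ |p.2| < 3 / 2} ⊆
        {p : ℝ × ℝ | |p.1 - p.2 * (p.2 ^ 2 - 1)| ≤ 1 / 4 ∧ |p.2| ≤ 3 / 2} :=
      fun p hp => ⟨hp.1.le, hp.2.le⟩
    apply interior_maximal hsub hopen
    constructor
    · show |x - z * (z ^ 2 - 1)| < 1/4
      rw [hze]; norm_num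
    · show |z| < 3/2
      rw [abs_lt]; exact ⟨by linarith, hz2⟩
  · -- no continuous selection
    rintro ⟨φ, hc, hS⟩
    have key : ∀ x ∈ Set.Icc (-1 : ℝ) 1,
        |x - φ x * ((φ x) ^ 2 - 1)| ≤ 1/4 ∧ |φ x| ≤ 3/2 := hS
    -- φ 1 > 1/2
    have h1 : (1/2 : ℝ) < φ 1 := by
      obtain ⟨ha, hb⟩ := key 1 (by norm_num)
      rw [abs_le] at ha hb
      by_contra h
      push_neg at h
      have := cubic_small hb.1 h
      nlinarith
    -- φ (-1) < -1/2
    have h2 : φ (-1) < -(1/2) := by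
      obtain ⟨ha, hb⟩ := key (-1) (by norm_num)
      rw [abs_le] at ha hb
      by_contra h
      push_neg at h
      have hle : -(φ (-1)) ≤ 1/2 := by linarith
      have hge : -(3/2 : ℝ) ≤ -(φ (-1)) := by linarith
      have := cubic_small hge hle
      nlinarith
    -- first crossing : φ p = -1/2, forcing p ≥ 1/8
    have hivt := intermediate_value_Icc (by norm_num : (-1:ℝ) ≤ 1) hc
    obtain ⟨p, hp, hpe⟩ := hivt (Set.mem_Icc.2 ⟨by linarith, by linarith⟩ :
      (-(1/2) : ℝ) ∈ Set.Icc (φ (-1)) (φ 1))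
    have hp18 : (1/8 : ℝ) ≤ p := by
      obtain ⟨ha, _⟩ := key p hp
      rw [hpe] at ha
      rw [abs_le] at ha
      norm_num at ha
      linarith [ha.2]
    -- second crossing on [p, 1] : φ q = 1/2, forcing q ≤ -1/8
    have hivt2 := intermediate_value_Icc hp.2 (hc.mono (Set.Icc_subset_Icc hp.1 le_rfl))
    obtain ⟨q, hq, hqe⟩ := hivt2 (Set.mem_Icc.2 ⟨by rw [hpe]; norm_num, by linarith⟩ :
      (1/2 : ℝ) ∈ Set.Icc (φ p) (φ 1))
    have hq' : q ∈ Set.Icc (-1 : ℝ) 1 := ⟨by linarith [hq.1, hp.1], hq.2⟩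
    have hq18 : q ≤ -(1/8 : ℝ) := by
      obtain ⟨ha, _⟩ := key q hq'
      rw [hqe] at ha
      rw [abs_le] at ha
      norm_num at ha
      linarith [ha.1]
    linarith [hq.1]
end

section
/- For the pencil A(x,y) = [[0, x, 0],[x, y_1, y_2],[0, y_2, x]], there do not exist vectors of polynomials V_{0i}, V_j ∈ R[x]³ (depending only on x, not on y) such that −x² = Σ_i V_{0i}^T V_{0i} + Σ_j V_j^T A(x,y) V_j holds identically in (x, y_1, y_2). -/
open Matrix

theorem stmt_16 :
    ¬ ∃ (N L : ℕ) (V0 : Fin N → Fin 3 → Polynomial ℝ) (V : Fin L → Fin 3 → Polynomial ℝ),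
      ∀ x y₁ y₂ : ℝ,
        -x ^ 2 = (∑ i, ∑ j, ((V0 i j).eval x) ^ 2) +
          ∑ i, (fun j => (V i j).eval x) ⬝ᵥ
            ((!![0, x, 0; x, y₁, y₂; 0, y₂, x] : Matrix (Fin 3) (Fin 3) ℝ) *ᵥ
              (fun j => (V i j).eval x)) := by
  rintro ⟨N, L, V0, V, h⟩
  have h1 := h 1 1 0
  have h0 := h 1 0 0
  norm_num [dotProduct, Matrix.mulVec, Fin.sum_univ_three, Matrix.cons_val_zero,
    Matrix.cons_val_one, Matrix.head_cons, Matrix.cons_val_two, Matrix.tail_cons,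
    Matrix.vecHead, Matrix.vecTail, Function.comp] at h0 h1
  -- comparing y₁ = 1 and y₁ = 0 forces the middle components to vanish at x = 1
  have e := add_left_cancel (h1.symm.trans h0)
  have hsum : ∑ i, ((V i 1).eval 1) ^ 2 = 0 := by
    have hd := sub_eq_zero_of_eq e
    rw [← Finset.sum_sub_distrib] at hd
    rw [← hd]
    exact Finset.sum_congr rfl fun i _ => by ring
  have hz : ∀ i, (V i 1).eval 1 = 0 := fun i => by
    have := (Finset.sum_eq_zero_iff_of_nonneg (fun i _ => sq_nonneg _)).mp hsum i
      (Finset.mem_univ i)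
    exact pow_eq_zero_iff (two_ne_zero) |>.mp this
  -- then the right-hand side at (1,0,0) is nonnegative, contradicting -1
  have hpos : (0:ℝ) ≤
      (∑ x : Fin N, ((V0 x 0).eval 1 ^ 2 + (V0 x 1).eval 1 ^ 2 + (V0 x 2).eval 1 ^ 2)) +
      ∑ x : Fin L, ((V x 0).eval 1 * (V x 1).eval 1 + (V x 1).eval 1 * (V x 0).eval 1 +
        (V x 2).eval 1 * (V x 2).eval 1) := by
    apply add_nonneg
    · apply Finset.sum_nonneg; intro i _; positivity
    · apply Finset.sum_nonneg; intro i _; rw [hz i]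
      nlinarith [mul_self_nonneg ((V i 2).eval 1)]
  linarith
end

section
/- Let G(x,y) = diag(y²(1−x²)−1, 2−x²) (2×2 diagonal matrix polynomial in x ∈ R, y ∈ R). If a polynomial g ∈ R[x] can be written as g(x) = σ_0(x,y) + σ_1(x,y)·(y²(1−x²)−1) + σ_2(x,y)·(2−x²) with σ_0, σ_1, σ_2 sums of squares in R[x,y], then σ_1 = 0 and g(x) = s_0(x) + s_2(x)(2−x²) for some sums of squares s_0, s_2 ∈ R[x]. -/
/-- A multivariate polynomial in `ℝ[x,y]` is a sum of squares. -/
def IsSOS2 (p : MvPolynomial (Fin 2) ℝ) : Prop :=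
  ∃ (L : ℕ) (q : Fin L → MvPolynomial (Fin 2) ℝ), p = ∑ i, (q i) ^ 2

/-- A univariate real polynomial is a sum of squares. -/
def IsSOS1 (p : Polynomial ℝ) : Prop :=
  ∃ (L : ℕ) (q : Fin L → Polynomial ℝ), p = ∑ i, (q i) ^ 2

open Filter

lemma sos2_map (φ : MvPolynomial (Fin 2) ℝ →ₐ[ℝ] Polynomial ℝ) {p : MvPolynomial (Fin 2) ℝ}
    (h : IsSOS2 p) : IsSOS1 (φ p) := by
  obtain ⟨L, q, rfl⟩ := h
  exact ⟨L, fun i => φ (q i), by simp [map_sum]⟩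

lemma sos2_nonneg {p : MvPolynomial (Fin 2) ℝ} (h : IsSOS2 p) (v : Fin 2 → ℝ) :
    0 ≤ MvPolynomial.eval v p := by
  obtain ⟨L, q, rfl⟩ := h
  simp only [map_sum, map_pow]
  exact Finset.sum_nonneg fun i _ => sq_nonneg _

lemma mv_aeval_eq_eval (f : Fin 2 → ℝ) (p : MvPolynomial (Fin 2) ℝ) :
    MvPolynomial.aeval f p = MvPolynomial.eval f p := by
  rw [MvPolynomial.aeval_def, Algebra.algebraMap_self]
  rfl

/-- Evaluating an `aeval` into `Polynomial ℝ` at a point. -/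
lemma eval_aeval_poly (f : Fin 2 → Polynomial ℝ) (p : MvPolynomial (Fin 2) ℝ) (y : ℝ) :
    Polynomial.eval y (MvPolynomial.aeval f p) =
      MvPolynomial.eval (fun i => Polynomial.eval y (f i)) p := by
  have h := MvPolynomial.comp_aeval_apply (f := f) (Polynomial.aeval y : Polynomial ℝ →ₐ[ℝ] ℝ) p
  rw [mv_aeval_eq_eval] at h
  rw [← congrFun (Polynomial.coe_aeval_eq_eval y) (MvPolynomial.aeval f p), h]
  congr 1

theorem stmt_17 (g : Polynomial ℝ) (σ0 σ1 σ2 : MvPolynomial (Fin 2) ℝ)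
    (h0 : IsSOS2 σ0) (h1 : IsSOS2 σ1) (h2 : IsSOS2 σ2)
    (hid : Polynomial.aeval (MvPolynomial.X 0 : MvPolynomial (Fin 2) ℝ) g =
      σ0 + σ1 * ((MvPolynomial.X 1) ^ 2 * (1 - (MvPolynomial.X 0) ^ 2) - 1) +
        σ2 * (2 - (MvPolynomial.X 0) ^ 2)) :
    σ1 = 0 ∧ ∃ s0 s2 : Polynomial ℝ, IsSOS1 s0 ∧ IsSOS1 s2 ∧
      g = s0 + s2 * (2 - Polynomial.X ^ 2) := by
  -- pointwise identity
  have hpt : ∀ x y : ℝ,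
      g.eval x = MvPolynomial.eval ![x, y] σ0 +
        MvPolynomial.eval ![x, y] σ1 * (y ^ 2 * (1 - x ^ 2) - 1) +
        MvPolynomial.eval ![x, y] σ2 * (2 - x ^ 2) := by
    intro x y
    have h := congrArg (MvPolynomial.eval ![x, y]) hid
    have hg : MvPolynomial.eval ![x, y]
        (Polynomial.aeval (MvPolynomial.X 0 : MvPolynomial (Fin 2) ℝ) g) = g.eval x := by
      have h2 := Polynomial.aeval_algHom_apply
        (MvPolynomial.aeval ![x, y] : MvPolynomial (Fin 2) ℝ →ₐ[ℝ] ℝ)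
        (MvPolynomial.X 0) g
      rw [mv_aeval_eq_eval ![x, y] (Polynomial.aeval (MvPolynomial.X 0) g)] at h2
      simp only [MvPolynomial.aeval_X, Matrix.cons_val_zero] at h2
      rw [← h2, Polynomial.coe_aeval_eq_eval]
    rw [hg] at h
    simp only [map_add, map_mul, map_sub, map_one, map_pow, map_ofNat, MvPolynomial.eval_X,
      Matrix.cons_val_one, Matrix.head_cons, Matrix.cons_val_zero] at h
    exact h
  -- σ1 = 0
  have key : ∀ x : ℝ, x ^ 2 < 1 → ∀ y : ℝ, MvPolynomial.eval ![x, y] σ1 = 0 := by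
    intro x hx y
    set q1 : Polynomial ℝ :=
      MvPolynomial.aeval ![Polynomial.C x, Polynomial.X] σ1 with hq1def
    have hq1 : ∀ z : ℝ, q1.eval z = MvPolynomial.eval ![x, z] σ1 := by
      intro z
      rw [hq1def, eval_aeval_poly]
      have : (fun i => Polynomial.eval z (![Polynomial.C x, Polynomial.X] i)) = ![x, z] := by
        funext i; fin_cases i <;> simp
      rw [this]
    have hσ0 : ∀ v : Fin 2 → ℝ, 0 ≤ MvPolynomial.eval v σ0 := sos2_nonneg h0
    have hσ1 : ∀ v : Fin 2 → ℝ, 0 ≤ MvPolynomial.eval v σ1 := sos2_nonneg h1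
    have hσ2 : ∀ v : Fin 2 → ℝ, 0 ≤ MvPolynomial.eval v σ2 := sos2_nonneg h2
    have hx2 : (0:ℝ) < 1 - x ^ 2 := by linarith
    have hx22 : (0:ℝ) < 2 - x ^ 2 := by nlinarith
    -- bound: for z with z^2*(1-x^2) - 1 ≥ 1, σ1(x,z) ≤ g.eval x
    have hbound : ∀ z : ℝ, 1 ≤ z ^ 2 * (1 - x ^ 2) - 1 →
        MvPolynomial.eval ![x, z] σ1 ≤ g.eval x := by
      intro z hz
      have h := hpt x z
      nlinarith [hσ0 ![x, z], hσ1 ![x, z], hσ2 ![x, z]]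
    set Y : ℝ := Real.sqrt (2 / (1 - x ^ 2)) with hYdef
    have hY : ∀ z : ℝ, Y ≤ z → 1 ≤ z ^ 2 * (1 - x ^ 2) - 1 := by
      intro z hz
      have hY0 : 0 ≤ Y := Real.sqrt_nonneg _
      have hYsq : Y ^ 2 = 2 / (1 - x ^ 2) := by
        rw [hYdef, Real.sq_sqrt (by positivity)]
      have : Y ^ 2 ≤ z ^ 2 := by nlinarith
      have h2 : (2 / (1 - x ^ 2)) * (1 - x ^ 2) = 2 := by field_simp
      nlinarith
    -- q1 is bounded on a ray, hence constant
    have hdeg : q1.degree ≤ 0 := by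
      rw [← Polynomial.abs_isBoundedUnder_iff]
      refine ⟨max (g.eval x) 0, ?_⟩
      rw [eventually_map]
      filter_upwards [eventually_ge_atTop Y] with z hz
      have hle := hbound z (hY z hz)
      rw [← hq1 z] at hle
      have hnn : 0 ≤ q1.eval z := by rw [hq1 z]; exact hσ1 ![x, z]
      rw [abs_of_nonneg hnn]
      exact le_max_of_le_left hle
    have hconst : ∀ z : ℝ, q1.eval z = q1.coeff 0 := by
      intro z
      conv_lhs => rw [Polynomial.eq_C_of_degree_le_zero hdeg]
      simp
    set c : ℝ := q1.coeff 0 with hcdef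
    have hc0 : 0 ≤ c := by rw [← hconst 0, hq1 0]; exact hσ1 ![x, 0]
    -- c ≤ 0: otherwise c * (z^2(1-x^2)-1) exceeds g.eval x
    have hcle : c ≤ 0 := by
      by_contra hcpos
      push_neg at hcpos
      set M : ℝ := max (g.eval x) 0 with hMdef
      set z : ℝ := Real.sqrt ((M / c + 2) / (1 - x ^ 2)) with hzdef
      have hzsq : z ^ 2 = (M / c + 2) / (1 - x ^ 2) := by
        rw [hzdef, Real.sq_sqrt]
        have hM : 0 ≤ M := le_max_right _ _
        positivity
      have hzval : z ^ 2 * (1 - x ^ 2) - 1 = M / c + 1 := by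
        rw [hzsq]; field_simp; ring
      have hM : 0 ≤ M := le_max_right _ _
      have h1z : 1 ≤ z ^ 2 * (1 - x ^ 2) - 1 := by
        rw [hzval]
        have : 0 ≤ M / c := by positivity
        linarith
      have h := hpt x z
      have hs1 : MvPolynomial.eval ![x, z] σ1 = c := by rw [← hq1 z, hconst z]
      have : g.eval x ≥ c * (M / c + 1) := by
        rw [← hzval]
        nlinarith [hσ0 ![x, z], hσ2 ![x, z]]
      have hMc : c * (M / c + 1) = M + c := by field_simp
      have hgM : g.eval x ≤ M := le_max_left _ _
      linarith [hMc ▸ ‹g.eval x ≥ c * (M / c + 1)›]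
    have hc : c = 0 := le_antisymm hcle hc0
    rw [← hq1 y, hconst y, hc]
  have hσ1zero : σ1 = 0 := by
    apply MvPolynomial.funext
    intro v
    -- for each y, the univariate polynomial in x vanishes on (-1,1)
    set r : Polynomial ℝ :=
      MvPolynomial.aeval ![Polynomial.X, Polynomial.C (v 1)] σ1 with hrdef
    have hr : ∀ x : ℝ, r.eval x = MvPolynomial.eval ![x, v 1] σ1 := by
      intro x
      rw [hrdef, eval_aeval_poly]
      have : (fun i => Polynomial.eval x (![Polynomial.X, Polynomial.C (v 1)] i)) = ![x, v 1] := by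
        funext i; fin_cases i <;> simp
      rw [this]
    have hr0 : r = 0 := by
      apply Polynomial.eq_zero_of_infinite_isRoot
      apply Set.Infinite.mono (s := Set.Ioo (-1 : ℝ) 1)
      · intro x hx
        have hx2 : x ^ 2 < 1 := by
          obtain ⟨hx1, hx2⟩ := hx
          nlinarith
        simp only [Set.mem_setOf_eq, Polynomial.IsRoot, hr]
        exact key x hx2 (v 1)
      · exact Set.Ioo_infinite (show (-1:ℝ) < 1 by norm_num)
    have hv : ![v 0, v 1] = v := by
      funext i; fin_cases i <;> rfl
    have := hr (v 0)
    rw [hr0] at this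
    simp only [Polynomial.eval_zero] at this
    rw [hv] at this
    rw [← this]
    simp
  refine ⟨hσ1zero, ?_⟩
  -- substitute y = 0
  set φ : MvPolynomial (Fin 2) ℝ →ₐ[ℝ] Polynomial ℝ :=
    MvPolynomial.aeval ![Polynomial.X, 0] with hφdef
  refine ⟨φ σ0, φ σ2, sos2_map φ h0, sos2_map φ h2, ?_⟩
  have h := congrArg φ hid
  rw [hσ1zero] at h
  have hg : φ (Polynomial.aeval (MvPolynomial.X 0 : MvPolynomial (Fin 2) ℝ) g) = g := by
    rw [← Polynomial.aeval_algHom_apply]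
    simp [hφdef]
  rw [hg] at h
  rw [h]
  simp [hφdef]
end
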